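/- arXiv:2303.10786 — 2 statements merged into one kernel-verified Lean document; each statement's English description precedes it below -/
import Mathlib

section
/- For every [a:b] ∈ ℂℙ¹ and every [c:d] ∈ ℂℙ¹ with [c:d] ≠ [a:b], the span of (bX−aY)³ and (dX−cY)(bX−aY)² equals the set of all elements of V divisible by (bX−aY)²; in particular this span does not depend on the choice of [c:d], and it is a Lagrangian of V. -/
noncomputable section

open MvPolynomial

/-- The polynomial ring `ℂ[X,Y]`. -/
abbrev P2 : Type := MvPolynomial (Fin 2) ℂ

/-- The variable `X`. -/
def Xv : P2 := X 0

/-- The variable `Y`. -/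
def Yv : P2 := X 1

/-- `V`: the space of homogeneous cubic polynomials in `X, Y`. -/
def Vcubic : Submodule ℂ P2 := homogeneousSubmodule (Fin 2) ℂ 3

/-- The coefficient of `X^i Y^j`. -/
def cf (i j : ℕ) (p : P2) : ℂ := coeff (Finsupp.single 0 i + Finsupp.single 1 j) p

/-- The alternating bilinear form `ω` with `ω(X³,Y³) = 1`, `ω(X²Y,XY²) = -1/3`,
all other pairings of distinct basis vectors being `0`. -/
def omegaForm (p q : P2) : ℂ :=
  cf 3 0 p * cf 0 3 q - cf 0 3 p * cf 3 0 q
    - (1 / 3) * (cf 2 1 p * cf 1 2 q - cf 1 2 p * cf 2 1 q)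

/-- The linear form `b X - a Y` associated to the point `[a : b] ∈ ℂℙ¹`. -/
def lf (a b : ℂ) : P2 := C b * Xv - C a * Yv

/-- A Lagrangian of `V`: a 2-dimensional subspace contained in `V` on which `ω` vanishes. -/
def IsLagrangian (W : Submodule ℂ P2) : Prop :=
  W ≤ Vcubic ∧ Module.finrank ℂ W = 2 ∧ ∀ p ∈ W, ∀ q ∈ W, omegaForm p q = 0

/-- A perfect cube: a nonzero element of the form `c • (bX - aY)³`. -/
def IsPerfectCube (p : P2) : Prop :=
  ∃ c a b : ℂ, c ≠ 0 ∧ (a ≠ 0 ∨ b ≠ 0) ∧ p = C c * lf a b ^ 3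

/-- The action of `SL(2,ℂ)` on `ℂ[X,Y]` by linear substitution of the variables. -/
def subst (g : Matrix.SpecialLinearGroup (Fin 2) ℂ) : P2 →ₐ[ℂ] P2 :=
  aeval (fun i => C (g.1 i 0) * Xv + C (g.1 i 1) * Yv)

/-- The induced action of `SL(2,ℂ)` on subspaces of `ℂ[X,Y]`. -/
def mapAct (g : Matrix.SpecialLinearGroup (Fin 2) ℂ) (W : Submodule ℂ P2) :
    Submodule ℂ P2 :=
  W.map (subst g).toLinearMap

/-- The `SL(2,ℂ)`-orbit of a subspace. -/
def slOrbit (W₀ : Submodule ℂ P2) : Set (Submodule ℂ P2) := {W | ∃ g, W = mapAct g W₀}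

lemma fin2_decomp (m : Fin 2 →₀ ℕ) :
    m = Finsupp.single 0 (m 0) + Finsupp.single 1 (m 1) := by
  ext x
  fin_cases x <;> simp [Finsupp.single_apply]

lemma pair_eq {i j k l : ℕ} :
    (Finsupp.single (0 : Fin 2) i + Finsupp.single 1 j) = Finsupp.single 0 k + Finsupp.single 1 l
      ↔ i = k ∧ j = l := by
  constructor
  · intro h
    constructor
    · have := DFunLike.congr_fun h 0; simpa [Finsupp.single_apply] using this
    · have := DFunLike.congr_fun h 1; simpa [Finsupp.single_apply] using this
  · rintro ⟨rfl, rfl⟩; rfl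

lemma cf_XY (i j k l : ℕ) (r : ℂ) :
    cf i j (C r * (Xv ^ k * Yv ^ l)) = if k = i ∧ l = j then r else 0 := by
  rw [cf, Xv, Yv, X_pow_eq_monomial, X_pow_eq_monomial, monomial_mul, one_mul,
    C_mul_monomial, mul_one, coeff_monomial]
  simp [pair_eq]

lemma cf_add (i j : ℕ) (p q : P2) : cf i j (p + q) = cf i j p + cf i j q := coeff_add _ _ _
lemma cf_sub (i j : ℕ) (p q : P2) : cf i j (p - q) = cf i j p - cf i j q := by simp [cf]
lemma cf_smul (i j : ℕ) (s : ℂ) (p : P2) : cf i j (s • p) = s * cf i j p := coeff_smul _ _ _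

lemma degree_fin2 (m : Fin 2 →₀ ℕ) : m.degree = m 0 + m 1 := by
  show m.support.sum m = _
  rw [show m.support.sum m = ∑ i : Fin 2, m i from
    Finset.sum_subset (Finset.subset_univ _) (by intro x _ hx; simpa using hx)]
  simp [Fin.sum_univ_two]

lemma deg1_decomp {q : P2} (hq : q.IsHomogeneous 1) :
    q = C (cf 1 0 q) * Xv + C (cf 0 1 q) * Yv := by
  have e10 : cf 1 0 q = coeff (Finsupp.single 0 1) q := by simp [cf]
  have e01 : cf 0 1 q = coeff (Finsupp.single 1 1) q := by simp [cf]
  ext m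
  rw [coeff_add, Xv, Yv, coeff_C_mul, coeff_C_mul, coeff_X', coeff_X']
  have hm := fin2_decomp m
  by_cases h1 : m 0 + m 1 = 1
  · have : (m 0 = 1 ∧ m 1 = 0) ∨ (m 0 = 0 ∧ m 1 = 1) := by omega
    rcases this with ⟨h0, h1'⟩ | ⟨h0, h1'⟩ <;>
      rw [hm, h0, h1'] <;>
      simp [Finsupp.single_zero, e10, e01, Finsupp.single_eq_single_iff]
  · have hc : coeff m q = 0 := hq.coeff_eq_zero (by rw [degree_fin2]; omega)
    rw [hc]
    have hx : ¬ Finsupp.single (0 : Fin 2) 1 = m := by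
      intro h; rw [← h] at h1; simp [Finsupp.single_apply] at h1
    have hy : ¬ Finsupp.single (1 : Fin 2) 1 = m := by
      intro h; rw [← h] at h1; simp [Finsupp.single_apply] at h1
    simp [hx, hy]


lemma lf_isHomogeneous (a b : ℂ) : (lf a b).IsHomogeneous 1 := by
  have h1 : (C b * Xv : P2).IsHomogeneous 1 := by
    simpa [Xv] using (isHomogeneous_C (Fin 2) b).mul (isHomogeneous_X ℂ (0 : Fin 2))
  have h2 : (C a * Yv : P2).IsHomogeneous 1 := by
    simpa [Yv] using (isHomogeneous_C (Fin 2) a).mul (isHomogeneous_X ℂ (1 : Fin 2))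
  exact h1.sub h2

lemma hL3 (a b : ℂ) : lf a b ^ 3
    = C (b^3) * (Xv^3 * Yv^0) - C (3*a*b^2) * (Xv^2 * Yv^1)
      + C (3*a^2*b) * (Xv^1 * Yv^2) - C (a^3) * (Xv^0 * Yv^3) := by
  simp only [lf, map_pow, map_mul, map_ofNat]
  ring

lemma hML2 (a b c d : ℂ) : lf c d * lf a b ^ 2
    = C (d*b^2) * (Xv^3 * Yv^0) - C (2*a*b*d + c*b^2) * (Xv^2 * Yv^1)
      + C (a^2*d + 2*a*b*c) * (Xv^1 * Yv^2) - C (a^2*c) * (Xv^0 * Yv^3) := by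
  simp only [lf, map_pow, map_mul, map_add, map_ofNat]
  ring

lemma hL1 (a b : ℂ) : lf a b = C b * (Xv^1 * Yv^0) - C a * (Xv^0 * Yv^1) := by
  simp only [lf]; ring

lemma lf_ne_zero {a b : ℂ} (hab : a ≠ 0 ∨ b ≠ 0) : lf a b ≠ 0 := by
  intro h
  have h1 : cf 1 0 (lf a b) = b := by
    rw [hL1, cf_sub, cf_XY, cf_XY]; norm_num
  have h2 : cf 0 1 (lf a b) = -a := by
    rw [hL1, cf_sub, cf_XY, cf_XY]; norm_num
  rw [h] at h1 h2
  simp [cf] at h1 h2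
  rcases hab with h | h <;> simp_all


lemma cf_of_expand {i j : ℕ} {r1 r2 r3 r4 : ℂ} :
    cf i j (C r1 * (Xv^3 * Yv^0) - C r2 * (Xv^2 * Yv^1)
      + C r3 * (Xv^1 * Yv^2) - C r4 * (Xv^0 * Yv^3))
    = (if 3 = i ∧ 0 = j then r1 else 0) - (if 2 = i ∧ 1 = j then r2 else 0)
      + (if 1 = i ∧ 2 = j then r3 else 0) - (if 0 = i ∧ 3 = j then r4 else 0) := by
  rw [cf_sub, cf_add, cf_sub, cf_XY, cf_XY, cf_XY, cf_XY]

lemma omega_base (a b c d : ℂ) :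
    omegaForm (lf a b ^ 3) (lf c d * lf a b ^ 2) = 0 := by
  have h30 : cf 3 0 (lf a b ^ 3) = b^3 := by rw [hL3, cf_of_expand]; norm_num
  have h21 : cf 2 1 (lf a b ^ 3) = -(3*a*b^2) := by rw [hL3, cf_of_expand]; norm_num
  have h12 : cf 1 2 (lf a b ^ 3) = 3*a^2*b := by rw [hL3, cf_of_expand]; norm_num
  have h03 : cf 0 3 (lf a b ^ 3) = -(a^3) := by rw [hL3, cf_of_expand]; norm_num
  have g30 : cf 3 0 (lf c d * lf a b ^ 2) = d*b^2 := by rw [hML2, cf_of_expand]; norm_num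
  have g21 : cf 2 1 (lf c d * lf a b ^ 2) = -(2*a*b*d + c*b^2) := by
    rw [hML2, cf_of_expand]; norm_num
  have g12 : cf 1 2 (lf c d * lf a b ^ 2) = a^2*d + 2*a*b*c := by
    rw [hML2, cf_of_expand]; norm_num
  have g03 : cf 0 3 (lf c d * lf a b ^ 2) = -(a^2*c) := by rw [hML2, cf_of_expand]; norm_num
  rw [omegaForm, h30, h21, h12, h03, g30, g21, g12, g03]
  ring

lemma factor_homog {L p q : P2} (hL : L.IsHomogeneous 2) (hp : p.IsHomogeneous 3)
    (h : p = L * q) : p = L * homogeneousComponent 1 q := by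
  set N := q.totalDegree with hN
  have hq : q = ∑ i ∈ Finset.range (N + 1), homogeneousComponent i q :=
    (sum_homogeneousComponent q).symm
  have hsum : p = ∑ i ∈ Finset.range (N + 1), L * homogeneousComponent i q := by
    rw [h, hq, Finset.mul_sum]
    rw [← hq]
  have happ := congrArg (homogeneousComponent 3) hsum
  rw [homogeneousComponent_of_mem ((mem_homogeneousSubmodule _ _).mpr hp),
    if_pos rfl, map_sum] at happ
  have hterm : ∀ i ∈ Finset.range (N + 1),
      homogeneousComponent 3 (L * homogeneousComponent i q)
        = if i = 1 then L * homogeneousComponent i q else 0 := by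
    intro i _
    rw [homogeneousComponent_of_mem ((mem_homogeneousSubmodule _ _).mpr
      (hL.mul (homogeneousComponent_isHomogeneous i q)))]
    by_cases hi : i = 1
    · subst hi; norm_num
    · rw [if_neg (by omega), if_neg hi]
  rw [Finset.sum_congr rfl hterm, Finset.sum_ite_eq' (Finset.range (N + 1)) 1] at happ
  by_cases h1 : 1 ∈ Finset.range (N + 1)
  · rwa [if_pos h1] at happ
  · have hN0 : N = 0 := by simp at h1; omega
    have : homogeneousComponent 1 q = 0 :=
      homogeneousComponent_eq_zero 1 q (by rw [← hN, hN0]; norm_num)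
    rw [if_neg h1] at happ
    rw [this, mul_zero, happ]


lemma span_eq (a b c d : ℂ) (hne : a * d - b * c ≠ 0) :
    Submodule.span ℂ {lf a b ^ 3, lf c d * lf a b ^ 2}
      = Vcubic ⊓ (Ideal.span {lf a b ^ 2}).restrictScalars ℂ := by
  apply le_antisymm
  · rw [Submodule.span_le]
    rintro x hx
    simp only [Set.mem_insert_iff, Set.mem_singleton_iff] at hx
    rcases hx with rfl | rfl
    · refine Submodule.mem_inf.mpr ⟨?_, ?_⟩
      · exact (mem_homogeneousSubmodule _ _).mpr (by simpa using (lf_isHomogeneous a b).pow 3)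
      · exact Ideal.mem_span_singleton.mpr ⟨lf a b, by ring⟩
    · refine Submodule.mem_inf.mpr ⟨?_, ?_⟩
      · exact (mem_homogeneousSubmodule _ _).mpr
          (by simpa using (lf_isHomogeneous c d).mul ((lf_isHomogeneous a b).pow 2))
      · exact Ideal.mem_span_singleton.mpr ⟨lf c d, by ring⟩
  · rintro p hp
    obtain ⟨hp3, hdvd⟩ := Submodule.mem_inf.mp hp
    obtain ⟨q, hq⟩ := Ideal.mem_span_singleton.mp hdvd
    have hL2 : (lf a b ^ 2).IsHomogeneous 2 := by simpa using (lf_isHomogeneous a b).pow 2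
    have hpfac : p = lf a b ^ 2 * homogeneousComponent 1 q :=
      factor_homog hL2 ((mem_homogeneousSubmodule _ _).mp hp3) hq
    set q1 := homogeneousComponent 1 q with hq1def
    set e := cf 1 0 q1
    set f := cf 0 1 q1
    have hdec : q1 = C e * Xv + C f * Yv := deg1_decomp (homogeneousComponent_isHomogeneous 1 q)
    set α := (-c * e - d * f) / (a * d - b * c)
    set β := (b * f + a * e) / (a * d - b * c)
    have he : e = α * b + β * d := by
      simp only [α, β]; rw [div_mul_eq_mul_div, div_mul_eq_mul_div, ← add_div, eq_div_iff hne]; ring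
    have hf : f = -(α * a + β * c) := by
      simp only [α, β]
      rw [div_mul_eq_mul_div, div_mul_eq_mul_div, ← add_div, ← neg_div, eq_div_iff hne]; ring
    rw [Submodule.mem_span_pair]
    refine ⟨α, β, ?_⟩
    rw [smul_eq_C_mul, smul_eq_C_mul, hpfac, hdec, he, hf, lf, lf]
    simp only [map_add, map_mul, map_neg]
    ring

lemma cf_C_mul (i j : ℕ) (r : ℂ) (p : P2) : cf i j (C r * p) = r * cf i j p := coeff_C_mul _ _ _

lemma cf10_lf (a b : ℂ) : cf 1 0 (lf a b) = b := by
  rw [hL1, cf_sub, cf_XY, cf_XY]; norm_num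

lemma cf01_lf (a b : ℂ) : cf 0 1 (lf a b) = -a := by
  rw [hL1, cf_sub, cf_XY, cf_XY]; norm_num

lemma oadd_l (p p' q : P2) : omegaForm (p + p') q = omegaForm p q + omegaForm p' q := by
  simp only [omegaForm, cf_add]; ring

lemma osmul_l (s : ℂ) (p q : P2) : omegaForm (s • p) q = s * omegaForm p q := by
  simp only [omegaForm, cf_smul]; ring

lemma ozero_l (q : P2) : omegaForm 0 q = 0 := by
  simp [omegaForm, cf]

lemma oswap (p q : P2) : omegaForm p q = -omegaForm q p := by
  simp only [omegaForm]; ring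

lemma oself (p : P2) : omegaForm p p = 0 := by
  simp only [omegaForm]; ring

lemma omega_vanish {S : Set P2} (h : ∀ x ∈ S, ∀ y ∈ S, omegaForm x y = 0) :
    ∀ p ∈ Submodule.span ℂ S, ∀ q ∈ Submodule.span ℂ S, omegaForm p q = 0 := by
  have hleft : ∀ y ∈ S, ∀ p ∈ Submodule.span ℂ S, omegaForm p y = 0 := by
    intro y hy p hp
    induction hp using Submodule.span_induction with
    | mem x hx => exact h x hx y hy
    | zero => exact ozero_l y
    | add p q _ _ hp hq => rw [oadd_l, hp, hq, add_zero]
    | smul s p _ hp => rw [osmul_l, hp, mul_zero]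
  intro p hp q hq
  induction hq using Submodule.span_induction with
  | mem x hx => exact hleft x hx p hp
  | zero => rw [oswap, ozero_l, neg_zero]
  | add x y _ _ hx hy =>
      rw [oswap p x] at hx
      rw [oswap p y] at hy
      rw [oswap, oadd_l]
      rw [neg_eq_zero] at hx hy ⊢
      rw [hx, hy, add_zero]
  | smul s x _ hx =>
      rw [oswap p x] at hx
      rw [oswap, osmul_l]
      rw [neg_eq_zero] at hx ⊢
      rw [hx, mul_zero]

lemma li_pair (a b c d : ℂ) (hab : a ≠ 0 ∨ b ≠ 0) (hne : a * d - b * c ≠ 0) :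
    LinearIndependent ℂ ![lf a b ^ 3, lf c d * lf a b ^ 2] := by
  rw [LinearIndependent.pair_iff]
  intro s t hst
  have hfac : (C s * lf a b + C t * lf c d) * lf a b ^ 2 = 0 := by
    rw [← hst, smul_eq_C_mul, smul_eq_C_mul]; ring
  have h0 : C s * lf a b + C t * lf c d = 0 := by
    rcases mul_eq_zero.mp hfac with h | h
    · exact h
    · exact absurd ((pow_eq_zero_iff two_ne_zero).mp h) (lf_ne_zero hab)
  have h10 : s * b + t * d = 0 := by
    have := congrArg (cf 1 0) h0
    rwa [cf_add, cf_C_mul, cf_C_mul, cf10_lf, cf10_lf, show cf 1 0 (0 : P2) = 0 by simp [cf]]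
      at this
  have h01 : s * a + t * c = 0 := by
    have := congrArg (cf 0 1) h0
    rw [cf_add, cf_C_mul, cf_C_mul, cf01_lf, cf01_lf, show cf 0 1 (0 : P2) = 0 by simp [cf]]
      at this
    linear_combination -this
  constructor
  · have hs : s * (a * d - b * c) = 0 := by linear_combination d * h01 - c * h10
    exact (mul_eq_zero.mp hs).resolve_right hne
  · have ht : t * (a * d - b * c) = 0 := by linear_combination a * h10 - b * h01
    exact (mul_eq_zero.mp ht).resolve_right hne

lemma finrank_two (a b c d : ℂ) (hab : a ≠ 0 ∨ b ≠ 0) (hne : a * d - b * c ≠ 0) :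
    Module.finrank ℂ
      (Submodule.span ℂ {lf a b ^ 3, lf c d * lf a b ^ 2} : Submodule ℂ P2) = 2 := by
  have hli := li_pair a b c d hab hne
  have h := finrank_span_eq_card hli
  have hr : Set.range ![lf a b ^ 3, lf c d * lf a b ^ 2]
      = ({lf a b ^ 3, lf c d * lf a b ^ 2} : Set P2) := by
    simp [Matrix.range_cons, Matrix.range_empty, Set.pair_comm]
  rw [hr] at h
  simpa using h

/-- For `[a:b] ∈ ℂℙ¹` and `[c:d] ≠ [a:b]`, the span of `(bX-aY)³` and
`(dX-cY)(bX-aY)²` equals the set of elements of `V` divisible by `(bX-aY)²`; in particular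
this span does not depend on the choice of `[c:d]`, and it is a Lagrangian of `V`. -/
theorem statement1 (a b c d : ℂ) (hab : a ≠ 0 ∨ b ≠ 0) (hcd : c ≠ 0 ∨ d ≠ 0)
    (hne : a * d - b * c ≠ 0) :
    ((Submodule.span ℂ {lf a b ^ 3, lf c d * lf a b ^ 2} : Submodule ℂ P2) : Set P2)
        = {p : P2 | p ∈ Vcubic ∧ lf a b ^ 2 ∣ p} ∧
    (∀ c' d' : ℂ, (c' ≠ 0 ∨ d' ≠ 0) → a * d' - b * c' ≠ 0 →
      Submodule.span ℂ {lf a b ^ 3, lf c d * lf a b ^ 2}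
        = Submodule.span ℂ {lf a b ^ 3, lf c' d' * lf a b ^ 2}) ∧
    IsLagrangian (Submodule.span ℂ {lf a b ^ 3, lf c d * lf a b ^ 2}) := by
  refine ⟨?_, ?_, ?_, ?_, ?_⟩
  · rw [span_eq a b c d hne]
    ext x
    simp [Ideal.mem_span_singleton]
  · intro c' d' _ hne'
    rw [span_eq a b c d hne, span_eq a b c' d' hne']
  · rw [span_eq a b c d hne]; exact inf_le_left
  · exact finrank_two a b c d hab hne
  · apply omega_vanish
    intro x hx y hy
    simp only [Set.mem_insert_iff, Set.mem_singleton_iff] at hx hy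
    rcases hx with rfl | rfl <;> rcases hy with rfl | rfl
    · exact oself _
    · exact omega_base a b c d
    · rw [oswap, omega_base, neg_zero]
    · exact oself _
end
end

section
/- Every Lagrangian W of V contains a nonzero polynomial of the form (bX−aY)²(dX−cY) with [a:b] ≠ [c:d] in ℂℙ¹, i.e. a cubic having a double root and a distinct simple root. -/
noncomputable section

open MvPolynomial

def cub (A B Cc D : ℂ) : P2 :=
  C A * Xv ^ 3 + C B * (Xv ^ 2 * Yv) + C Cc * (Xv * Yv ^ 2) + C D * Yv ^ 3

lemma Xv_monomial : Xv = monomial (Finsupp.single 0 1) (1:ℂ) := by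
  rw [Xv, ← X_pow_eq_monomial, pow_one]
lemma Yv_monomial : Yv = monomial (Finsupp.single 1 1) (1:ℂ) := by
  rw [Yv, ← X_pow_eq_monomial, pow_one]

lemma cub_eq_sum_monomial (A B Cc D : ℂ) :
    cub A B Cc D = monomial (Finsupp.single 0 3 + Finsupp.single 1 0) A
      + monomial (Finsupp.single 0 2 + Finsupp.single 1 1) B
      + monomial (Finsupp.single 0 1 + Finsupp.single 1 2) Cc
      + monomial (Finsupp.single 0 0 + Finsupp.single 1 3) D := by
  simp [cub, Xv_monomial, Yv_monomial, monomial_pow, monomial_mul, C_mul_monomial]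

lemma fin2_eq_iff (d e : Fin 2 →₀ ℕ) : d = e ↔ d 0 = e 0 ∧ d 1 = e 1 := by
  constructor
  · rintro rfl; exact ⟨rfl, rfl⟩
  · rintro ⟨h0, h1⟩
    ext i
    fin_cases i
    · exact h0
    · exact h1

lemma cf_cub_30 (A B Cc D : ℂ) : cf 3 0 (cub A B Cc D) = A := by
  simp [cf, cub_eq_sum_monomial, coeff_monomial, fin2_eq_iff, Finsupp.single_apply]
lemma cf_cub_21 (A B Cc D : ℂ) : cf 2 1 (cub A B Cc D) = B := by
  simp [cf, cub_eq_sum_monomial, coeff_monomial, fin2_eq_iff, Finsupp.single_apply]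
lemma cf_cub_12 (A B Cc D : ℂ) : cf 1 2 (cub A B Cc D) = Cc := by
  simp [cf, cub_eq_sum_monomial, coeff_monomial, fin2_eq_iff, Finsupp.single_apply]
lemma cf_cub_03 (A B Cc D : ℂ) : cf 0 3 (cub A B Cc D) = D := by
  simp [cf, cub_eq_sum_monomial, coeff_monomial, fin2_eq_iff, Finsupp.single_apply]

lemma cub_inj {A B Cc D A' B' Cc' D' : ℂ} (h : cub A B Cc D = cub A' B' Cc' D') :
    A = A' ∧ B = B' ∧ Cc = Cc' ∧ D = D' :=
  ⟨by simpa [cf_cub_30] using congrArg (cf 3 0) h,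
   by simpa [cf_cub_21] using congrArg (cf 2 1) h,
   by simpa [cf_cub_12] using congrArg (cf 1 2) h,
   by simpa [cf_cub_03] using congrArg (cf 0 3) h⟩

lemma fin2_degree (d : Fin 2 →₀ ℕ) : d.degree = d 0 + d 1 := by
  rw [Finsupp.degree]
  show d.support.sum d = d 0 + d 1
  rw [show d.support.sum d = ∑ i : Fin 2, d i from
    (Finsupp.sum_fintype d (fun _ n => n) (fun _ => rfl) : _)]
  simp [Fin.sum_univ_two]

lemma cubic_repr {p : P2} (hp : p ∈ homogeneousSubmodule (Fin 2) ℂ 3) :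
    p = cub (cf 3 0 p) (cf 2 1 p) (cf 1 2 p) (cf 0 3 p) := by
  rw [mem_homogeneousSubmodule] at hp
  apply MvPolynomial.ext
  intro d
  by_cases hd : d.degree = 3
  · have hde : d = Finsupp.single 0 (d 0) + Finsupp.single 1 (d 1) := by
      rw [fin2_eq_iff]; simp [Finsupp.single_apply]
    rw [fin2_degree] at hd
    rw [hde]
    have h1 : d 1 = 3 - d 0 := by omega
    rw [h1]
    have h0 : d 0 ≤ 3 := by omega
    interval_cases h : d 0
    · show cf 0 3 p = cf 0 3 (cub _ _ _ _); rw [cf_cub_03]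
    · show cf 1 2 p = cf 1 2 (cub _ _ _ _); rw [cf_cub_12]
    · show cf 2 1 p = cf 2 1 (cub _ _ _ _); rw [cf_cub_21]
    · show cf 3 0 p = cf 3 0 (cub _ _ _ _); rw [cf_cub_30]
  · rw [hp.coeff_eq_zero hd, cub_eq_sum_monomial]
    have h3 : ∀ i j : ℕ, i + j = 3 →
        (Finsupp.single (0:Fin 2) i + Finsupp.single 1 j) ≠ d := by
      intro i j hij hne
      apply hd
      rw [← hne, fin2_degree]
      simp [Finsupp.single_apply, hij]
    simp only [coeff_add, coeff_monomial]
    rw [if_neg (h3 3 0 rfl), if_neg (h3 2 1 rfl), if_neg (h3 1 2 rfl), if_neg (h3 0 3 rfl)]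
    simp

def quad (u v w : ℂ) : P2 := C u * Xv ^ 2 + C v * (Xv * Yv) + C w * Yv ^ 2

lemma mul_lf_quad (a b u v w : ℂ) :
    lf a b * quad u v w = cub (b*u) (b*v - a*u) (b*w - a*v) (-(a*w)) := by
  simp only [lf, quad, cub, map_mul, map_sub, map_neg]
  ring

lemma lf_mul_lf (a b c d : ℂ) :
    lf a b * lf c d = quad (b*d) (-(b*c) - a*d) (a*c) := by
  simp only [lf, quad, map_mul, map_sub, map_neg]
  ring

lemma C_mul_lf_sq (t a b : ℂ) :
    C t * lf a b ^ 2 = quad (t*b^2) (-(2*t*a*b)) (t*a^2) := by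
  simp only [lf, quad, map_mul, map_sub, map_neg, map_pow, map_ofNat]
  ring

lemma quad_add (u v w u' v' w' : ℂ) :
    quad u v w + quad u' v' w' = quad (u+u') (v+v') (w+w') := by
  simp only [quad, map_add]; ring

lemma C_mul_cub (c A B Cc D : ℂ) :
    C c * cub A B Cc D = cub (c*A) (c*B) (c*Cc) (c*D) := by
  simp only [cub, map_mul]; ring

lemma lf_smul (k a b : ℂ) : lf (k*a) (k*b) = C k * lf a b := by
  simp only [lf, map_mul]; ring

lemma C_mul_lf_cube (s a b : ℂ) :
    C s * lf a b ^ 3 = cub (s*b^3) (-(3*s*a*b^2)) (3*s*a^2*b) (-(s*a^3)) := by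
  simp only [lf, cub, map_mul, map_neg, map_pow, map_ofNat]
  ring

open Polynomial in
lemma cubic_root {A B Cc D : ℂ} (hA : A ≠ 0) : ∃ r : ℂ, A*r^3 + B*r^2 + Cc*r + D = 0 := by
  have hdeg : (Polynomial.C A * Polynomial.X^3 + Polynomial.C B * Polynomial.X^2
      + Polynomial.C Cc * Polynomial.X + Polynomial.C D).degree = 3 := by
    compute_degree!
  obtain ⟨r, hr⟩ := Complex.exists_root (hdeg ▸ (by norm_num : (0:WithBot ℕ) < 3))
  refine ⟨r, ?_⟩
  simpa [Polynomial.IsRoot] using hr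

open Polynomial in
lemma quadratic_root {A B Cc : ℂ} (hA : A ≠ 0) : ∃ r : ℂ, A*r^2 + B*r + Cc = 0 := by
  have hdeg : (Polynomial.C A * Polynomial.X^2 + Polynomial.C B * Polynomial.X
      + Polynomial.C Cc).degree = 2 := by
    compute_degree!
  obtain ⟨r, hr⟩ := Complex.exists_root (hdeg ▸ (by norm_num : (0:WithBot ℕ) < 2))
  refine ⟨r, ?_⟩
  simpa [Polynomial.IsRoot] using hr

open Polynomial in
lemma quartic_root {e4 e3 e2 e1 e0 : ℂ} (h4 : e4 ≠ 0) :
    ∃ r : ℂ, e4*r^4 + e3*r^3 + e2*r^2 + e1*r + e0 = 0 := by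
  have hdeg : (Polynomial.C e4 * Polynomial.X^4 + Polynomial.C e3 * Polynomial.X^3
      + Polynomial.C e2 * Polynomial.X^2 + Polynomial.C e1 * Polynomial.X
      + Polynomial.C e0).degree = 4 := by
    compute_degree!
  obtain ⟨r, hr⟩ := Complex.exists_root (hdeg ▸ (by norm_num : (0:WithBot ℕ) < 4))
  refine ⟨r, ?_⟩
  simpa [Polynomial.IsRoot] using hr

lemma quad_eq_sum_monomial (u v w : ℂ) :
    quad u v w = monomial (Finsupp.single 0 2 + Finsupp.single 1 0) u
      + monomial (Finsupp.single 0 1 + Finsupp.single 1 1) v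
      + monomial (Finsupp.single 0 0 + Finsupp.single 1 2) w := by
  simp [quad, Xv_monomial, Yv_monomial, monomial_pow, monomial_mul, C_mul_monomial]

lemma cf_quad_20 (u v w : ℂ) : cf 2 0 (quad u v w) = u := by
  simp [cf, quad_eq_sum_monomial, coeff_monomial, fin2_eq_iff, Finsupp.single_apply]
lemma cf_quad_11 (u v w : ℂ) : cf 1 1 (quad u v w) = v := by
  simp [cf, quad_eq_sum_monomial, coeff_monomial, fin2_eq_iff, Finsupp.single_apply]
lemma cf_quad_02 (u v w : ℂ) : cf 0 2 (quad u v w) = w := by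
  simp [cf, quad_eq_sum_monomial, coeff_monomial, fin2_eq_iff, Finsupp.single_apply]

lemma quad_inj {u v w u' v' w' : ℂ} (h : quad u v w = quad u' v' w') :
    u = u' ∧ v = v' ∧ w = w' :=
  ⟨by simpa [cf_quad_20] using congrArg (cf 2 0) h,
   by simpa [cf_quad_11] using congrArg (cf 1 1) h,
   by simpa [cf_quad_02] using congrArg (cf 0 2) h⟩

lemma lf_prop {a b c d : ℂ} (hab : ¬(a = 0 ∧ b = 0)) (hdet : a*d - b*c = 0) :
    ∃ k : ℂ, c = k*a ∧ d = k*b := by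
  by_cases hb : b = 0
  · have ha : a ≠ 0 := by tauto
    subst hb
    have hd : d = 0 := by
      have h0 : a * d = 0 := by linear_combination hdet
      rcases mul_eq_zero.1 h0 with h | h
      · exact absurd h ha
      · exact h
    exact ⟨c/a, by field_simp, by simp [hd]⟩
  · refine ⟨d/b, ?_, by field_simp⟩
    field_simp
    linear_combination -hdet

lemma cubic_div {A B Cc D a b : ℂ} (hab : ¬(a = 0 ∧ b = 0))
    (hroot : A*a^3 + B*a^2*b + Cc*a*b^2 + D*b^3 = 0) :
    ∃ u v w : ℂ, cub A B Cc D = lf a b * quad u v w := by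
  by_cases hb : b = 0
  · have ha : a ≠ 0 := by tauto
    subst hb
    have hA : A = 0 := by
      have h0 : A * a^3 = 0 := by linear_combination hroot
      rcases mul_eq_zero.1 h0 with h | h
      · exact h
      · exact absurd (pow_eq_zero_iff (by norm_num) |>.1 h) ha
    refine ⟨-(B/a), -(Cc/a), -(D/a), ?_⟩
    rw [mul_lf_quad]
    have e1 : (0:ℂ)*(-(B/a)) = A := by rw [hA]; ring
    have e2 : (0:ℂ)*(-(Cc/a)) - a*(-(B/a)) = B := by field_simp; ring
    have e3 : (0:ℂ)*(-(D/a)) - a*(-(Cc/a)) = Cc := by field_simp; ring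
    have e4 : -(a*(-(D/a))) = D := by field_simp
    rw [e1, e2, e3, e4]
  · refine ⟨A/b, (B + a*(A/b))/b, (Cc + a*((B + a*(A/b))/b))/b, ?_⟩
    rw [mul_lf_quad]
    have h1 : b*(A/b) = A := by field_simp
    have h2 : b*((B + a*(A/b))/b) - a*(A/b) = B := by field_simp; ring
    have h3 : b*((Cc + a*((B + a*(A/b))/b))/b) - a*((B + a*(A/b))/b) = Cc := by
      field_simp; ring
    have h4 : -(a*((Cc + a*((B + a*(A/b))/b))/b)) = D := by
      field_simp
      linear_combination -hroot
    rw [h1, h2, h3, h4]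

lemma quad_div {u v w a b : ℂ} (hab : ¬(a = 0 ∧ b = 0))
    (hroot : u*a^2 + v*a*b + w*b^2 = 0) :
    ∃ c d : ℂ, quad u v w = lf a b * lf c d := by
  by_cases hb : b = 0
  · have ha : a ≠ 0 := by tauto
    subst hb
    have hu : u = 0 := by
      have h0 : u * a^2 = 0 := by linear_combination hroot
      rcases mul_eq_zero.1 h0 with h | h
      · exact h
      · exact absurd (pow_eq_zero_iff (by norm_num) |>.1 h) ha
    refine ⟨w/a, -(v/a), ?_⟩
    rw [lf_mul_lf]
    have e1 : (0:ℂ)*(-(v/a)) = u := by rw [hu]; ring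
    have e2 : -((0:ℂ)*(w/a)) - a*(-(v/a)) = v := by field_simp; ring
    have e3 : a*(w/a) = w := by field_simp
    rw [e1, e2, e3]
  · refine ⟨-((v + a*(u/b))/b), u/b, ?_⟩
    rw [lf_mul_lf]
    have h1 : b*(u/b) = u := by field_simp
    have h2 : -(b*(-((v + a*(u/b))/b))) - a*(u/b) = v := by field_simp; ring
    have h3 : a*(-((v + a*(u/b))/b)) = w := by
      field_simp
      linear_combination -hroot
    rw [h1, h2, h3]

def disc3 (A B Cc D : ℂ) : ℂ :=
  18*A*B*Cc*D - 4*B^3*D + B^2*Cc^2 - 4*A*Cc^3 - 27*A^2*D^2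

lemma disc3_factor (c a1 b1 a2 b2 a3 b3 : ℂ) :
    disc3 (c*(b1*b2*b3)) (-(c*(a1*b2*b3 + a2*b1*b3 + a3*b1*b2)))
      (c*(a1*a2*b3 + a1*a3*b2 + a2*a3*b1)) (-(c*(a1*a2*a3)))
      = c^4 * (a1*b2 - a2*b1)^2 * ((a1*b3 - a3*b1)^2 * (a2*b3 - a3*b2)^2) := by
  rw [disc3]; ring

lemma lf_mul3 (c a1 b1 a2 b2 a3 b3 : ℂ) :
    C c * (lf a1 b1 * (lf a2 b2 * lf a3 b3))
      = cub (c*(b1*b2*b3)) (-(c*(a1*b2*b3 + a2*b1*b3 + a3*b1*b2)))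
          (c*(a1*a2*b3 + a1*a3*b2 + a2*a3*b1)) (-(c*(a1*a2*a3))) := by
  simp only [lf, cub, map_mul, map_neg, map_add]
  ring

lemma quad_disc_zero {u v w : ℂ} (h : ¬(u = 0 ∧ v = 0 ∧ w = 0)) (hd : v^2 - 4*(u*w) = 0) :
    ∃ c' a' b', c' ≠ 0 ∧ ¬(a' = 0 ∧ b' = 0) ∧ quad u v w = C c' * lf a' b' ^ 2 := by
  by_cases hu : u = 0
  · subst hu
    have hv : v = 0 := by
      have : v^2 = 0 := by linear_combination hd
      exact pow_eq_zero_iff (by norm_num) |>.1 this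
    subst hv
    have hw : w ≠ 0 := by tauto
    refine ⟨w, 1, 0, hw, by simp, ?_⟩
    rw [C_mul_lf_sq]
    have e1 : w*(0:ℂ)^2 = 0 := by ring
    have e2 : -(2*w*1*(0:ℂ)) = 0 := by ring
    have e3 : w*(1:ℂ)^2 = w := by ring
    rw [e1, e2, e3]
  · refine ⟨u, -(v/(2*u)), 1, hu, by simp, ?_⟩
    rw [C_mul_lf_sq]
    have e1 : u*(1:ℂ)^2 = u := by ring
    have e2 : -(2*u*(-(v/(2*u)))*1) = v := by field_simp
    have e3 : u*(-(v/(2*u)))^2 = w := by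
      field_simp
      linear_combination hd
    rw [e1, e2, e3]

lemma quad_congr {u v w u' v' w' : ℂ} (h1 : u = u') (h2 : v = v') (h3 : w = w') :
    quad u v w = quad u' v' w' := by rw [h1, h2, h3]

lemma cub_congr {A B Cc D A' B' Cc' D' : ℂ} (h1 : A = A') (h2 : B = B') (h3 : Cc = Cc')
    (h4 : D = D') : cub A B Cc D = cub A' B' Cc' D' := by rw [h1, h2, h3, h4]

lemma quad_factor {u v w : ℂ} (hu : u ≠ 0) :
    ∃ a2 b2 a3 b3 : ℂ, ¬(a2 = 0 ∧ b2 = 0) ∧ ¬(a3 = 0 ∧ b3 = 0)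
      ∧ quad u v w = lf a2 b2 * lf a3 b3 := by
  obtain ⟨s, hs⟩ := quadratic_root (B := v) (Cc := w) hu
  obtain ⟨c, d, hcd⟩ := quad_div (u := u) (v := v) (w := w) (a := s) (b := 1)
    (by simp) (by linear_combination hs)
  have hd : u = 1*d := by
    rw [lf_mul_lf] at hcd
    exact (quad_inj hcd).1
  refine ⟨s, 1, c, d, by simp, ?_, hcd⟩
  rintro ⟨-, rfl⟩
  exact hu (by simpa using hd)

lemma cubic_factor {A B Cc D : ℂ} (h : ¬(A = 0 ∧ B = 0 ∧ Cc = 0 ∧ D = 0)) :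
    ∃ c a1 b1 a2 b2 a3 b3 : ℂ, c ≠ 0 ∧ ¬(a1 = 0 ∧ b1 = 0) ∧ ¬(a2 = 0 ∧ b2 = 0)
      ∧ ¬(a3 = 0 ∧ b3 = 0) ∧ cub A B Cc D = C c * (lf a1 b1 * (lf a2 b2 * lf a3 b3)) := by
  by_cases hA : A = 0
  · subst hA
    have hsplit : cub 0 B Cc D = lf 1 0 * quad (-B) (-Cc) (-D) := by
      rw [mul_lf_quad]
      exact cub_congr (by ring) (by ring) (by ring) (by ring)
    by_cases hB : B = 0
    · subst hB
      by_cases hC : Cc = 0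
      · subst hC
        have hD : D ≠ 0 := by tauto
        refine ⟨-D, 1, 0, 1, 0, 1, 0, neg_ne_zero.2 hD, by simp, by simp, by simp, ?_⟩
        rw [lf_mul3]
        exact cub_congr (by ring) (by ring) (by ring) (by ring)
      · refine ⟨1, 1, 0, 1, 0, -D, Cc, one_ne_zero, by simp, by simp, by tauto, ?_⟩
        rw [map_one, one_mul, hsplit]
        congr 1
        rw [lf_mul_lf]
        exact quad_congr (by ring) (by ring) (by ring)
    · obtain ⟨a2, b2, a3, b3, h2, h3, hq⟩ := quad_factor (v := -Cc) (w := -D) (neg_ne_zero.2 hB)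
      exact ⟨1, 1, 0, a2, b2, a3, b3, one_ne_zero, by simp, h2, h3, by
        rw [map_one, one_mul, hsplit, hq]⟩
  · obtain ⟨r, hr⟩ := cubic_root (B := B) (Cc := Cc) (D := D) hA
    obtain ⟨u, v, w, hdiv⟩ := cubic_div (A := A) (B := B) (Cc := Cc) (D := D) (a := r) (b := 1)
      (by simp) (by linear_combination hr)
    have hu : A = 1*u := by
      rw [mul_lf_quad] at hdiv
      exact (cub_inj hdiv).1
    have hu' : u ≠ 0 := by
      intro h0
      exact hA (by rw [hu, h0, mul_zero])
    obtain ⟨a2, b2, a3, b3, h2, h3, hq⟩ := quad_factor (v := v) (w := w) hu'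
    exact ⟨1, r, 1, a2, b2, a3, b3, one_ne_zero, by simp, h2, h3, by
      rw [map_one, one_mul, hdiv, hq]⟩

lemma repeated_root {A B Cc D : ℂ} (h : ¬(A = 0 ∧ B = 0 ∧ Cc = 0 ∧ D = 0))
    (hd : disc3 A B Cc D = 0) :
    ∃ c a b a' b' : ℂ, c ≠ 0 ∧ ¬(a = 0 ∧ b = 0) ∧ ¬(a' = 0 ∧ b' = 0)
      ∧ cub A B Cc D = C c * (lf a b ^ 2 * lf a' b') := by
  obtain ⟨c, a1, b1, a2, b2, a3, b3, hc, h1, h2, h3, hf⟩ := cubic_factor h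
  have hexp := hf.trans (lf_mul3 c a1 b1 a2 b2 a3 b3)
  obtain ⟨eA, eB, eC, eD⟩ := cub_inj hexp
  have hd' : c^4 * (a1*b2 - a2*b1)^2 * ((a1*b3 - a3*b1)^2 * (a2*b3 - a3*b2)^2) = 0 := by
    rw [← disc3_factor, ← eA, ← eB, ← eC, ← eD]
    exact hd
  have hc4 : c^4 ≠ 0 := pow_ne_zero _ hc
  rcases mul_eq_zero.1 hd' with h0 | h0
  · rcases mul_eq_zero.1 h0 with h0 | h0
    · exact absurd h0 hc4
    · -- a1*b2 - a2*b1 = 0 : factors 1 and 2 proportional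
      have hdet : a1*b2 - b1*a2 = 0 := by
        have := pow_eq_zero_iff (n := 2) (by norm_num) |>.1 h0
        linear_combination this
      obtain ⟨k, hk1, hk2⟩ := lf_prop h1 hdet
      have hk : k ≠ 0 := by
        rintro rfl
        exact h2 ⟨by simpa using hk1, by simpa using hk2⟩
      refine ⟨c*k, a1, b1, a3, b3, mul_ne_zero hc hk, h1, h3, ?_⟩
      rw [hf, hk1, hk2, lf_smul, map_mul]
      ring
  · rcases mul_eq_zero.1 h0 with h0 | h0
    · -- a1*b3 - a3*b1 = 0 : factors 1 and 3 proportional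
      have hdet : a1*b3 - b1*a3 = 0 := by
        have := pow_eq_zero_iff (n := 2) (by norm_num) |>.1 h0
        linear_combination this
      obtain ⟨k, hk1, hk2⟩ := lf_prop h1 hdet
      have hk : k ≠ 0 := by
        rintro rfl
        exact h3 ⟨by simpa using hk1, by simpa using hk2⟩
      refine ⟨c*k, a1, b1, a2, b2, mul_ne_zero hc hk, h1, h2, ?_⟩
      rw [hf, hk1, hk2, lf_smul, map_mul]
      ring
    · -- a2*b3 - a3*b2 = 0 : factors 2 and 3 proportional
      have hdet : a2*b3 - b2*a3 = 0 := by
        have := pow_eq_zero_iff (n := 2) (by norm_num) |>.1 h0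
        linear_combination this
      obtain ⟨k, hk1, hk2⟩ := lf_prop h2 hdet
      have hk : k ≠ 0 := by
        rintro rfl
        exact h3 ⟨by simpa using hk1, by simpa using hk2⟩
      refine ⟨c*k, a2, b2, a1, b1, mul_ne_zero hc hk, h2, h1, ?_⟩
      rw [hf, hk1, hk2, lf_smul, map_mul]
      ring

lemma pencil_disc (p3 p2 p1 p0 q3 q2 q1 q0 : ℂ) :
    ∃ l m : ℂ, ¬(l = 0 ∧ m = 0) ∧
      disc3 (l*p3 + m*q3) (l*p2 + m*q2) (l*p1 + m*q1) (l*p0 + m*q0) = 0 := by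
  by_cases he4 : disc3 p3 p2 p1 p0 = 0
  · refine ⟨1, 0, by simp, ?_⟩
    rw [disc3] at he4 ⊢
    linear_combination he4
  · rw [disc3] at he4
    obtain ⟨r, hr⟩ := quartic_root (e4 := p2^2*p1^2 - 4*p2^3*p0 - 4*p3*p1^3
        + 18*p3*p2*p1*p0 - 27*p3^2*p0^2)
      (e3 := -4*p1^3*q3 + 18*p2*p1*p0*q3 + 2*p2*p1^2*q2 - 12*p2^2*p0*q2 + 2*p2^2*p1*q1
        - 4*p2^3*q0 - 54*p3*p0^2*q3 + 18*p3*p1*p0*q2 - 12*p3*p1^2*q1 + 18*p3*p2*p0*q1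
        + 18*p3*p2*p1*q0 - 54*p3^2*p0*q0)
      (e2 := -27*p0^2*q3^2 + 18*p1*p0*q3*q2 + p1^2*q2^2 - 12*p1^2*q3*q1 - 12*p2*p0*q2^2
        + 18*p2*p0*q3*q1 + 4*p2*p1*q2*q1 + 18*p2*p1*q3*q0 + p2^2*q1^2 - 12*p2^2*q2*q0
        + 18*p3*p0*q2*q1 - 108*p3*p0*q3*q0 - 12*p3*p1*q1^2 + 18*p3*p1*q2*q0
        + 18*p3*p2*q1*q0 - 27*p3^2*q0^2)
      (e1 := -4*p0*q2^3 + 18*p0*q3*q2*q1 - 54*p0*q3^2*q0 + 2*p1*q2^2*q1 - 12*p1*q3*q1^2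
        + 18*p1*q3*q2*q0 + 2*p2*q2*q1^2 - 12*p2*q2^2*q0 + 18*p2*q3*q1*q0 - 4*p3*q1^3
        + 18*p3*q2*q1*q0 - 54*p3*q3*q0^2)
      (e0 := q2^2*q1^2 - 4*q2^3*q0 - 4*q3*q1^3 + 18*q3*q2*q1*q0 - 27*q3^2*q0^2)
      (by intro h0; exact he4 (by linear_combination h0))
    refine ⟨r, 1, by simp, ?_⟩
    rw [disc3]
    linear_combination hr

lemma cub_add (A B Cc D A' B' Cc' D' : ℂ) :
    cub A B Cc D + cub A' B' Cc' D' = cub (A+A') (B+B') (Cc+Cc') (D+D') := by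
  simp only [cub, map_add]; ring

lemma cub_zero : cub 0 0 0 0 = 0 := by simp [cub]

set_option synthInstance.maxHeartbeats 1000000 in
lemma exists_pair {W : Submodule ℂ P2} (h2 : Module.finrank ℂ W = 2) :
    ∃ p q : P2, p ∈ W ∧ q ∈ W
      ∧ (∀ l m : ℂ, l • p + m • q = 0 → l = 0 ∧ m = 0) := by
  have : Module.Finite ℂ W := Module.finite_of_finrank_eq_succ h2
  let b := Module.finBasisOfFinrankEq ℂ W h2
  have li : LinearIndependent ℂ (fun i : Fin 2 => ((b i : W) : P2)) := by
    have h := b.linearIndependent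
    exact h.map' W.subtype (Submodule.ker_subtype W)
  refine ⟨(b 0 : W), (b 1 : W), (b 0).2, (b 1).2, ?_⟩
  intro l m hlm
  have hsum : ∑ i : Fin 2, ![l, m] i • (fun i : Fin 2 => ((b i : W) : P2)) i = 0 := by
    rw [Fin.sum_univ_two]
    simp only [Matrix.cons_val_zero, Matrix.cons_val_one, Matrix.head_cons]
    exact hlm
  have := Fintype.linearIndependent_iff.1 li ![l, m] hsum
  exact ⟨this 0, this 1⟩

lemma exists_notin_span {W : Submodule ℂ P2} (h2 : Module.finrank ℂ W = 2) (f : P2) :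
    ∃ g ∈ W, g ∉ Submodule.span ℂ {f} := by
  obtain ⟨p, q, hp, hq, hli⟩ := exists_pair h2
  by_cases hps : p ∈ Submodule.span ℂ {f}
  · by_cases hqs : q ∈ Submodule.span ℂ {f}
    · exfalso
      obtain ⟨α, hα⟩ := Submodule.mem_span_singleton.1 hps
      obtain ⟨β, hβ⟩ := Submodule.mem_span_singleton.1 hqs
      have h0 : β • p + (-α) • q = 0 := by
        rw [← hα, ← hβ, smul_smul, smul_smul, ← add_smul]
        have hz : β * α + (-α) * β = 0 := by ring
        rw [hz, zero_smul]
      obtain ⟨hb0, ha0⟩ := hli β (-α) h0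
      have hα0 : α = 0 := by simpa using ha0
      have hp0 : p = 0 := by rw [← hα, hα0, zero_smul]
      have h10 := hli 1 0 (by rw [hp0]; simp)
      exact one_ne_zero h10.1
    · exact ⟨q, hq, hqs⟩
  · exact ⟨p, hp, hps⟩

lemma omega_cube (c a b q3 q2 q1 q0 : ℂ) :
    omegaForm (C c * lf a b ^ 3) (cub q3 q2 q1 q0)
      = c * (q3*a^3 + q2*a^2*b + q1*a*b^2 + q0*b^3) := by
  rw [C_mul_lf_cube, omegaForm]
  simp only [cf_cub_30, cf_cub_21, cf_cub_12, cf_cub_03]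
  ring

lemma span_cube_mem {c a b : ℂ} (hc : c ≠ 0) (s : ℂ) :
    C s * lf a b ^ 3 ∈ Submodule.span ℂ {C c * lf a b ^ 3} := by
  rw [Submodule.mem_span_singleton]
  refine ⟨s/c, ?_⟩
  rw [smul_eq_C_mul, ← mul_assoc, ← map_mul]
  congr 2
  field_simp

lemma cube_case {W : Submodule ℂ P2} (hW : IsLagrangian W) {c a b : ℂ} (hc : c ≠ 0)
    (hab : ¬(a = 0 ∧ b = 0)) (hmem : C c * lf a b ^ 3 ∈ W) :
    ∃ A B Cc D : ℂ, A*D - B*Cc ≠ 0 ∧ lf A B ^ 2 * lf Cc D ∈ W := by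
  obtain ⟨q', hq'W, hq'span⟩ := exists_notin_span hW.2.1 (C c * lf a b ^ 3)
  have hq'V : q' ∈ homogeneousSubmodule (Fin 2) ℂ 3 := hW.1 hq'W
  set q3 := cf 3 0 q' with hq3
  set q2 := cf 2 1 q' with hq2
  set q1 := cf 1 2 q' with hq1
  set q0 := cf 0 3 q' with hq0
  have hrepr : q' = cub q3 q2 q1 q0 := cubic_repr hq'V
  have homega : omegaForm (C c * lf a b ^ 3) q' = 0 := hW.2.2 _ hmem _ hq'W
  rw [hrepr, omega_cube] at homega
  have hroot : q3*a^3 + q2*a^2*b + q1*a*b^2 + q0*b^3 = 0 := by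
    rcases mul_eq_zero.1 homega with h0 | h0
    · exact absurd h0 hc
    · exact h0
  obtain ⟨u, v, w, hdiv⟩ := cubic_div (A := q3) (B := q2) (Cc := q1) (D := q0) hab (by linear_combination hroot)
  by_cases hQ : u*a^2 + v*a*b + w*b^2 = 0
  · -- q' is already l^2 * m
    obtain ⟨c2, d2, hquad⟩ := quad_div hab hQ
    have hq'form : q' = lf a b ^ 2 * lf c2 d2 := by
      rw [hrepr, hdiv, hquad]; ring
    refine ⟨a, b, c2, d2, ?_, hq'form ▸ hq'W⟩
    intro hdet
    obtain ⟨k, hk1, hk2⟩ := lf_prop hab hdet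
    apply hq'span
    have : q' = C k * lf a b ^ 3 := by
      rw [hq'form, hk1, hk2, lf_smul]; ring
    rw [this]
    exact span_cube_mem hc k
  · -- shift by a multiple of the cube
    set Qab := u*a^2 + v*a*b + w*b^2 with hQab
    set t := (v^2 - 4*(u*w)) / (4*Qab) with ht
    have hg : (t/c) • (C c * lf a b ^ 3) + q' ∈ W :=
      W.add_mem (W.smul_mem _ hmem) hq'W
    have hgt : (t/c) • (C c * lf a b ^ 3) = C t * lf a b ^ 3 := by
      rw [smul_eq_C_mul, ← mul_assoc, ← map_mul]
      congr 2
      field_simp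
    have hsplit : C t * lf a b ^ 3 + q'
        = lf a b * quad (t*b^2 + u) (-(2*t*a*b) + v) (t*a^2 + w) := by
      rw [hrepr, hdiv, ← quad_add, ← C_mul_lf_sq]
      ring
    have hdisc0 : (-(2*t*a*b) + v)^2 - 4*((t*b^2 + u)*(t*a^2 + w)) = 0 := by
      have h4Q : (4:ℂ)*Qab ≠ 0 := by
        intro h0
        exact hQ (by
          have : Qab = 0 := by
            have h4 : (4:ℂ) ≠ 0 := by norm_num
            exact (mul_eq_zero.1 h0).resolve_left h4
          rw [hQab] at this; exact this)
      rw [ht]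
      field_simp
      ring
    have hR0 : ¬(t*b^2 + u = 0 ∧ -(2*t*a*b) + v = 0 ∧ t*a^2 + w = 0) := by
      rintro ⟨h1, h2, h3⟩
      apply hQ
      linear_combination a^2*h1 + a*b*h2 + b^2*h3
    obtain ⟨c', a', b', hc', hab', hRform⟩ := quad_disc_zero hR0 (by linear_combination hdisc0)
    have hgform : (t/c) • (C c * lf a b ^ 3) + q' = C c' * (lf a' b' ^ 2 * lf a b) := by
      rw [hgt, hsplit, hRform]; ring
    have hmem2 : lf a' b' ^ 2 * lf a b ∈ W := by
      have := W.smul_mem (1/c') hg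
      rw [hgform, smul_eq_C_mul, ← mul_assoc, ← map_mul] at this
      have he : (1/c') * c' = 1 := by field_simp
      rwa [he, map_one, one_mul] at this
    refine ⟨a', b', a, b, ?_, hmem2⟩
    intro hdet
    obtain ⟨k, hk1, hk2⟩ := lf_prop hab' hdet
    have hk : k ≠ 0 := by
      rintro rfl
      exact hab ⟨by simpa using hk1, by simpa using hk2⟩
    apply hq'span
    have hq'cube : q' = C (c'*k - t*k^3) * lf a' b' ^ 3 := by
      have hgf2 : q' = C c' * (lf a' b' ^ 2 * lf a b) - C t * lf a b ^ 3 := by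
        rw [← hgform, hgt]; ring
      rw [hgf2, hk1, hk2, lf_smul]
      simp only [map_sub, map_mul, map_pow]
      ring
    have hfcube : C c * lf a b ^ 3 = C (c*k^3) * lf a' b' ^ 3 := by
      rw [hk1, hk2, lf_smul, map_mul, map_pow]
      ring
    rw [hq'cube, hfcube]
    exact span_cube_mem (by simp [hc, hk, pow_ne_zero] : c*k^3 ≠ 0) _

/-- Every Lagrangian `W` of `V` contains a (necessarily nonzero) polynomial
of the form `(bX-aY)²(dX-cY)` with `[a:b] ≠ [c:d]` in `ℂℙ¹`, i.e. a cubic having a double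
root and a distinct simple root. -/
theorem statement4 (W : Submodule ℂ P2) (hW : IsLagrangian W) :
    ∃ a b c d : ℂ, a * d - b * c ≠ 0 ∧ lf a b ^ 2 * lf c d ∈ W := by
  obtain ⟨p, q, hpW, hqW, hli⟩ := exists_pair hW.2.1
  have hpV : p ∈ homogeneousSubmodule (Fin 2) ℂ 3 := hW.1 hpW
  have hqV : q ∈ homogeneousSubmodule (Fin 2) ℂ 3 := hW.1 hqW
  have hprep : p = cub (cf 3 0 p) (cf 2 1 p) (cf 1 2 p) (cf 0 3 p) := cubic_repr hpV
  have hqrep : q = cub (cf 3 0 q) (cf 2 1 q) (cf 1 2 q) (cf 0 3 q) := cubic_repr hqV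
  obtain ⟨l, m, hlm, hdisc⟩ := pencil_disc (cf 3 0 p) (cf 2 1 p) (cf 1 2 p) (cf 0 3 p)
    (cf 3 0 q) (cf 2 1 q) (cf 1 2 q) (cf 0 3 q)
  set F3 := l * cf 3 0 p + m * cf 3 0 q with hF3
  set F2 := l * cf 2 1 p + m * cf 2 1 q with hF2
  set F1 := l * cf 1 2 p + m * cf 1 2 q with hF1
  set F0 := l * cf 0 3 p + m * cf 0 3 q with hF0
  have hfW : l • p + m • q ∈ W := W.add_mem (W.smul_mem _ hpW) (W.smul_mem _ hqW)
  have hfrep : l • p + m • q = cub F3 F2 F1 F0 := by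
    rw [smul_eq_C_mul, smul_eq_C_mul]
    nth_rewrite 1 [hprep]
    nth_rewrite 1 [hqrep]
    rw [C_mul_cub, C_mul_cub, cub_add]
  have hFnz : ¬(F3 = 0 ∧ F2 = 0 ∧ F1 = 0 ∧ F0 = 0) := by
    rintro ⟨h3, h2, h1, h0⟩
    apply hlm
    apply hli
    rw [hfrep, h3, h2, h1, h0, cub_zero]
  obtain ⟨c, a, b, a', b', hc, hab, hab', hform⟩ := repeated_root hFnz hdisc
  have hfW2 : C c * (lf a b ^ 2 * lf a' b') ∈ W := by
    rw [← hform, ← hfrep]; exact hfW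
  by_cases hdet : a * b' - b * a' = 0
  · -- triple root: reduce to the cube case
    obtain ⟨k, hk1, hk2⟩ := lf_prop hab hdet
    have hk : k ≠ 0 := by
      rintro rfl
      exact hab' ⟨by simpa using hk1, by simpa using hk2⟩
    have hcube : C (c*k) * lf a b ^ 3 ∈ W := by
      have : C (c*k) * lf a b ^ 3 = C c * (lf a b ^ 2 * lf a' b') := by
        rw [hk1, hk2, lf_smul, map_mul]
        ring
      rw [this]
      exact hfW2
    exact cube_case hW (mul_ne_zero hc hk) hab hcube
  · refine ⟨a, b, a', b', hdet, ?_⟩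
    have := W.smul_mem (1/c) hfW2
    rw [smul_eq_C_mul, ← mul_assoc, ← map_mul] at this
    have he : (1/c) * c = 1 := by field_simp
    rwa [he, map_one, one_mul] at this
end
end
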